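/- arXiv:math/0609311 — 2 statements merged into one kernel-verified Lean document; each statement's English description precedes it below -/
import Mathlib

section
/- In the setting of a pseudo-para-cyclic B-comodule X_• over a left exact comonad B on a complete category, with X_n^B ⊂ X_n defined as the joint equalizer (limit of equalizers) of the pairs (ρ_n ∘ τ_n^m, B(τ_n^m) ∘ ρ_n) for all m ∈ ℕ, the face maps restrict: for each 0 ≤ j ≤ n there is a unique morphism ∂_j^B : X_{n+1}^B → X_n^B with η_n ∘ ∂_j^B = ∂_j ∘ η_{n+1}. Concretely, the key computation is: ρ_n ∘ τ_n^i ∘ ∂_j ∘ η_{n+1} = B(τ_n^i) ∘ ρ_n ∘ ∂_j ∘ η_{n+1} for all i ∈ ℕ, using the para-cyclic relation τ_n^i ∂_j = ∂_q τ_{n+1}^{i+p} where i + j = (n+1)p + q, 0 ≤ q ≤ n. -/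
open CategoryTheory Simplicial

/-- A para-cyclic object in a category `C`. -/
structure Paracyclic (C : Type*) [Category C] where
  X : SimplicialObject C
  τ : ∀ n : ℕ, X _⦋n⦌ ⟶ X _⦋n⦌
  δτ_succ : ∀ (n : ℕ) (i : Fin (n + 1)),
    τ (n + 1) ≫ X.δ i.succ = X.δ i.castSucc ≫ τ n
  δτ_zero : ∀ n : ℕ, τ (n + 1) ≫ X.δ 0 = X.δ (Fin.last (n + 1))
  στ_succ : ∀ (n : ℕ) (i : Fin n),
    τ n ≫ X.σ i.succ = X.σ i.castSucc ≫ τ (n + 1)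
  στ_zero : ∀ n : ℕ, τ n ≫ X.σ 0 = X.σ (Fin.last n) ≫ τ (n + 1) ≫ τ (n + 1)

/-- `τ_n^k`. -/
def Paracyclic.τpow {C : Type*} [Category C] (P : Paracyclic C) (n : ℕ) :
    ℕ → (P.X _⦋n⦌ ⟶ P.X _⦋n⦌) := fun k => match k with
  | 0 => 𝟙 _
  | k + 1 => P.τ n ≫ P.τpow n k

namespace Paracyclic
variable {C : Type*} [Category C] (P : Paracyclic C)

lemma τpow_succ' (n i : ℕ) : P.τpow n (i + 1) = P.τpow n i ≫ P.τ n := by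
  induction i with
  | zero => simp [τpow]
  | succ k ih =>
    show P.τ n ≫ P.τpow n (k + 1) = (P.τ n ≫ P.τpow n k) ≫ P.τ n
    rw [ih, Category.assoc]

lemma key (n : ℕ) (j : Fin (n + 2)) (i : ℕ) :
    ∃ p, ∃ q : Fin (n + 2),
      P.X.δ j ≫ P.τpow n i = P.τpow (n + 1) p ≫ P.X.δ q := by
  induction i with
  | zero => exact ⟨0, j, by simp [τpow]⟩
  | succ k ih =>
    obtain ⟨p, q, h⟩ := ih
    by_cases hq : q.val < n + 1
    · refine ⟨p + 1, (⟨q.val, hq⟩ : Fin (n + 1)).succ, ?_⟩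
      have hs := P.δτ_succ n ⟨q.val, hq⟩
      have hc : (⟨q.val, hq⟩ : Fin (n + 1)).castSucc = q := by ext; rfl
      rw [hc] at hs
      rw [τpow_succ', τpow_succ', ← Category.assoc, h, Category.assoc,
        ← hs, ← Category.assoc]
    · have hql : q = Fin.last (n + 1) := by
        ext; have := q.isLt; simp [Fin.last]; omega
      refine ⟨p + 2, (0 : Fin (n + 1)).succ, ?_⟩
      have hz := P.δτ_zero n
      have hs := P.δτ_succ n 0
      have hc : (0 : Fin (n + 1)).castSucc = (0 : Fin (n + 2)) := rfl
      rw [hc] at hs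
      rw [τpow_succ', ← Category.assoc, h, Category.assoc, hql, ← hz,
        Category.assoc, ← hs]
      show _ = P.τpow (n+1) (p+1+1) ≫ _
      rw [τpow_succ', τpow_succ']
      simp only [Category.assoc]

end Paracyclic

/-- in the setting of a pseudo-para-cyclic `B`-comodule over a
left exact comonad on a complete category, with `η_n : X_n^B ⟶ X_n` the joint
equalizer of the pairs `(ρ_n ∘ τ_n^m, B(τ_n^m) ∘ ρ_n)`, the face maps
restrict: for `0 ≤ j ≤ n` there is a unique `∂_j^B : X_{n+1}^B ⟶ X_n^B` with
`η_n ∘ ∂_j^B = ∂_j ∘ η_{n+1}`; the key computation is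
`ρ_n ∘ τ_n^i ∘ ∂_j ∘ η_{n+1} = B(τ_n^i) ∘ ρ_n ∘ ∂_j ∘ η_{n+1}` for all `i`. -/
theorem face_maps_restrict {C : Type*} [Category C]
    [Limits.HasLimits C] (B : Comonad C)
    [Limits.PreservesLimits B.toFunctor]
    (P : Paracyclic C)
    (ρ : ∀ n : ℕ, P.X _⦋n⦌ ⟶ B.obj (P.X _⦋n⦌))
    (hcounit : ∀ n, ρ n ≫ B.ε.app _ = 𝟙 _)
    (hcoassoc : ∀ n, ρ n ≫ B.δ.app _ = ρ n ≫ B.map (ρ n))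
    (hδ : ∀ (n : ℕ) (i : Fin (n + 2)),
      P.X.δ i ≫ ρ n = ρ (n + 1) ≫ B.map (P.X.δ i))
    (hσ : ∀ (n : ℕ) (i : Fin (n + 1)),
      P.X.σ i ≫ ρ (n + 1) = ρ n ≫ B.map (P.X.σ i))
    (L : ℕ → C) (η : ∀ n : ℕ, L n ⟶ P.X _⦋n⦌)
    (hLeq : ∀ n m : ℕ,
      η n ≫ P.τpow n m ≫ ρ n = η n ≫ ρ n ≫ B.map (P.τpow n m))
    (hLuniv : ∀ (n : ℕ) (Z : C) (f : Z ⟶ P.X _⦋n⦌),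
      (∀ m : ℕ, f ≫ P.τpow n m ≫ ρ n = f ≫ ρ n ≫ B.map (P.τpow n m)) →
      ∃! g : Z ⟶ L n, g ≫ η n = f) :
    ∀ (n j : ℕ) (hj : j ≤ n),
      (∀ i : ℕ,
        η (n + 1) ≫ P.X.δ ⟨j, by omega⟩ ≫ P.τpow n i ≫ ρ n =
          η (n + 1) ≫ P.X.δ ⟨j, by omega⟩ ≫ ρ n ≫ B.map (P.τpow n i)) ∧
      ∃! dB : L (n + 1) ⟶ L n,
        dB ≫ η n = η (n + 1) ≫ P.X.δ ⟨j, by omega⟩ := by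

  intro n j hj
  set jf : Fin (n + 2) := ⟨j, by omega⟩
  have hkey : ∀ i : ℕ,
      η (n + 1) ≫ P.X.δ jf ≫ P.τpow n i ≫ ρ n =
        η (n + 1) ≫ P.X.δ jf ≫ ρ n ≫ B.map (P.τpow n i) := by
    intro i
    obtain ⟨p, q, h⟩ := P.key n jf i
    have step1 : P.X.δ jf ≫ P.τpow n i ≫ ρ n =
        P.τpow (n + 1) p ≫ ρ (n + 1) ≫ B.map (P.X.δ q) := by
      rw [← Category.assoc, h, Category.assoc, hδ n q]
    calc η (n + 1) ≫ P.X.δ jf ≫ P.τpow n i ≫ ρ n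
        = (η (n + 1) ≫ P.τpow (n + 1) p ≫ ρ (n + 1)) ≫ B.map (P.X.δ q) := by
          rw [step1]; simp only [Category.assoc]
      _ = (η (n + 1) ≫ ρ (n + 1) ≫ B.map (P.τpow (n + 1) p)) ≫
            B.map (P.X.δ q) := by rw [hLeq (n + 1) p]
      _ = η (n + 1) ≫ ρ (n + 1) ≫ B.map (P.X.δ jf) ≫ B.map (P.τpow n i) := by
          simp only [Category.assoc]
          rw [← B.toFunctor.map_comp, ← h, B.toFunctor.map_comp]
      _ = η (n + 1) ≫ P.X.δ jf ≫ ρ n ≫ B.map (P.τpow n i) := by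
          slice_lhs 2 3 => rw [← hδ n jf]
          simp only [Category.assoc]
  refine ⟨hkey, ?_⟩
  exact hLuniv n (L (n + 1)) (η (n + 1) ≫ P.X.δ jf)
    (fun m => by simpa only [Category.assoc] using hkey m)
end

section
/- In the setting of a pseudo-para-cyclic B-comodule X_• over a left exact comonad B on a complete category, with η_n : X_n^B → X_n as above, the coaction restricts: ρ_n ∘ η_n factors through B(η_n) : B(X_n^B) → B(X_n), yielding a B-comodule structure on X_n^B. The key computation is B²(τ_n^j) ∘ B(ρ_n) ∘ ρ_n ∘ η_n = B(ρ_n) ∘ B(τ_n^j) ∘ ρ_n ∘ η_n for all j ∈ ℕ, using coassociativity B(ρ_n) ∘ ρ_n = Δ_{X_n} ∘ ρ_n, naturality of Δ, and the defining equalizer property of η_n; left exactness of B identifies the limit of the equalizers of (B²(τ_n^j) ∘ B(ρ_n), B(ρ_n) ∘ B(τ_n^j)) with B(X_n^B). -/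
open CategoryTheory Simplicial

section Aux

open Limits

variable {C : Type*} [Category C]

/-- The shape for the joint equalizer. -/
abbrev coShape : MulticospanShape where
  L := PUnit.{1}
  R := ℕ
  fst _ := PUnit.unit
  snd _ := PUnit.unit

/-- The multicospan index for the joint equalizer. -/
@[simps]
def coIndex (B : Comonad C) (P : Paracyclic C)
    (ρ : ∀ n : ℕ, P.X _⦋n⦌ ⟶ B.obj (P.X _⦋n⦌)) (n : ℕ) :
    MulticospanIndex coShape C where
  left _ := P.X _⦋n⦌
  right _ := B.obj (P.X _⦋n⦌)
  fst m := P.τpow n m ≫ ρ n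
  snd m := ρ n ≫ B.map (P.τpow n m)

end Aux

/-- in the setting of a pseudo-para-cyclic `B`-comodule over a
left exact comonad on a complete category, with `η_n : X_n^B ⟶ X_n` the joint
equalizer of the pairs `(ρ_n ∘ τ_n^m, B(τ_n^m) ∘ ρ_n)`, the coaction
restricts: `ρ_n ∘ η_n` factors (uniquely) through `B(η_n)`, yielding a
`B`-comodule structure on `X_n^B`.  The key computation is
`B²(τ_n^j) ∘ B(ρ_n) ∘ ρ_n ∘ η_n = B(ρ_n) ∘ B(τ_n^j) ∘ ρ_n ∘ η_n`. -/
theorem coaction_restricts {C : Type*} [Category C]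
    [Limits.HasLimits C] (B : Comonad C)
    [Limits.PreservesLimits B.toFunctor]
    (P : Paracyclic C)
    (ρ : ∀ n : ℕ, P.X _⦋n⦌ ⟶ B.obj (P.X _⦋n⦌))
    (hcounit : ∀ n, ρ n ≫ B.ε.app _ = 𝟙 _)
    (hcoassoc : ∀ n, ρ n ≫ B.δ.app _ = ρ n ≫ B.map (ρ n))
    (hδ : ∀ (n : ℕ) (i : Fin (n + 2)),
      P.X.δ i ≫ ρ n = ρ (n + 1) ≫ B.map (P.X.δ i))
    (hσ : ∀ (n : ℕ) (i : Fin (n + 1)),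
      P.X.σ i ≫ ρ (n + 1) = ρ n ≫ B.map (P.X.σ i))
    (L : ℕ → C) (η : ∀ n : ℕ, L n ⟶ P.X _⦋n⦌)
    (hLeq : ∀ n m : ℕ,
      η n ≫ P.τpow n m ≫ ρ n = η n ≫ ρ n ≫ B.map (P.τpow n m))
    (hLuniv : ∀ (n : ℕ) (Z : C) (f : Z ⟶ P.X _⦋n⦌),
      (∀ m : ℕ, f ≫ P.τpow n m ≫ ρ n = f ≫ ρ n ≫ B.map (P.τpow n m)) →
      ∃! g : Z ⟶ L n, g ≫ η n = f) :
    ∀ n : ℕ,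
      (∀ j : ℕ,
        η n ≫ ρ n ≫ B.map (ρ n) ≫ B.map (B.map (P.τpow n j)) =
          η n ≫ ρ n ≫ B.map (P.τpow n j) ≫ B.map (ρ n)) ∧
      ∃! r : L n ⟶ B.obj (L n), r ≫ B.map (η n) = η n ≫ ρ n := by
  intro n
  -- the key computation
  have key : ∀ j : ℕ,
      η n ≫ ρ n ≫ B.map (ρ n) ≫ B.map (B.map (P.τpow n j)) =
        η n ≫ ρ n ≫ B.map (P.τpow n j) ≫ B.map (ρ n) := by
    intro j
    have hnat : B.δ.app (P.X _⦋n⦌) ≫ B.map (B.map (P.τpow n j)) =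
        B.map (P.τpow n j) ≫ B.δ.app (P.X _⦋n⦌) := by
      simpa using (B.δ.naturality (P.τpow n j)).symm
    calc η n ≫ ρ n ≫ B.map (ρ n) ≫ B.map (B.map (P.τpow n j))
        = (η n ≫ ρ n ≫ B.map (ρ n)) ≫ B.map (B.map (P.τpow n j)) := by
          simp only [Category.assoc]
      _ = (η n ≫ ρ n ≫ B.δ.app _) ≫ B.map (B.map (P.τpow n j)) := by
          rw [hcoassoc n]
      _ = η n ≫ ρ n ≫ B.map (P.τpow n j) ≫ B.δ.app _ := by
          simp only [Category.assoc, hnat]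
      _ = (η n ≫ ρ n ≫ B.map (P.τpow n j)) ≫ B.δ.app _ := by
          simp only [Category.assoc]
      _ = (η n ≫ P.τpow n j ≫ ρ n) ≫ B.δ.app _ := by rw [hLeq n j]
      _ = η n ≫ P.τpow n j ≫ ρ n ≫ B.map (ρ n) := by
          simp only [Category.assoc, hcoassoc n]
      _ = (η n ≫ P.τpow n j ≫ ρ n) ≫ B.map (ρ n) := by
          simp only [Category.assoc]
      _ = (η n ≫ ρ n ≫ B.map (P.τpow n j)) ≫ B.map (ρ n) := by rw [hLeq n j]
      _ = η n ≫ ρ n ≫ B.map (P.τpow n j) ≫ B.map (ρ n) := by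
          simp only [Category.assoc]
  refine ⟨key, ?_⟩
  -- set up the multifork
  set I := coIndex B P ρ n with hI
  have wfork : ∀ b : ℕ, (fun _ : PUnit.{1} => η n) (coShape.fst b) ≫ I.fst b =
      (fun _ : PUnit.{1} => η n) (coShape.snd b) ≫ I.snd b := by
    intro b
    exact hLeq n b
  set K : Limits.Multifork I := Limits.Multifork.ofι I (L n) (fun _ => η n) wfork with hK
  have hKlim : Limits.IsLimit K := by
    apply Limits.Multifork.IsLimit.mk
    case lift =>
      intro E
      exact (hLuniv n E.pt (E.ι PUnit.unit) (fun m => E.condition m)).choose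
    case fac =>
      intro E i
      exact (hLuniv n E.pt (E.ι PUnit.unit)
        (fun m => E.condition m)).choose_spec.1
    case uniq =>
      intro E m hm
      exact (hLuniv n E.pt (E.ι PUnit.unit)
        (fun m => E.condition m)).choose_spec.2 m (hm PUnit.unit)
  haveI : Limits.PreservesLimitsOfSize.{0, 0} B.toFunctor :=
    Limits.preservesLimitsOfSize_shrink B.toFunctor
  have hBlim : Limits.IsLimit (B.toFunctor.mapCone K) :=
    Limits.isLimitOfPreserves B.toFunctor hKlim
  -- the cone on `η n ≫ ρ n`
  have hsndkey : ∀ j : ℕ,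
      (η n ≫ ρ n) ≫ B.map (I.fst j) = (η n ≫ ρ n) ≫ B.map (I.snd j) := by
    intro j
    have h1 : B.map (I.fst j) = B.map (P.τpow n j) ≫ B.map (ρ n) := by
      exact B.map_comp _ _
    have h2 : B.map (I.snd j) = B.map (ρ n) ≫ B.map (B.map (P.τpow n j)) := by
      exact B.map_comp _ _
    change (η n ≫ ρ n) ≫ B.map (P.τpow n j ≫ ρ n) = (η n ≫ ρ n) ≫ B.map (ρ n ≫ B.map (P.τpow n j))
    rw [B.map_comp, B.map_comp]
    simpa only [Category.assoc] using (key j).symm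
  let E : Limits.Cone (I.multicospan ⋙ B.toFunctor) :=
    { pt := L n
      π :=
        { app := fun x =>
            match x with
            | Limits.WalkingMulticospan.left _ => η n ≫ ρ n
            | Limits.WalkingMulticospan.right b => (η n ≫ ρ n) ≫ B.map (I.fst b)
          naturality := by
            rintro _ _ (_ | _ | _)
            · simp
            · simp
              exact (Category.assoc _ _ _).symm
            · simp
              exact (Category.assoc _ _ _).symm.trans (hsndkey _) } }
  refine ⟨hBlim.lift E, ?_, ?_⟩
  · have := hBlim.fac E (Limits.WalkingMulticospan.left PUnit.unit)
    exact this
  · intro r' hr'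
    refine hBlim.uniq E r' ?_
    rintro (a | b)
    · exact hr'
    · have : (B.toFunctor.mapCone K).π.app (Limits.WalkingMulticospan.right b) =
          B.map (η n) ≫ B.map (I.fst b) := by
        exact B.map_comp _ _
      rw [this]
      show r' ≫ B.map (η n) ≫ B.map (I.fst b) = (η n ≫ ρ n) ≫ B.map (I.fst b)
      rw [← Category.assoc, hr']
end
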